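/- arXiv:2107.03885 — 3 statements merged into one kernel-verified Lean document; each statement's English description precedes it below -/
import Mathlib

section
/- For m, k, l, alpha with k <= n/4, l <= k, and alpha >= 4*k*l/n, the encoding length w(m,k,l,alpha) = log2(2 * 2^m * 2^alpha * C(n, k-alpha) * C(l, alpha)) satisfies w(m,k,l,alpha+1) <= w(m,k,l,alpha) - 1. -/
lemma key_choose (n k l a : ℕ) (ha : 1 ≤ a) (hal : a < l) (hlk : l ≤ k) (hkn : 4 * k ≤ n)
    (h4 : 4 * k * l ≤ a * n) :
    4 * n.choose (k - (a + 1)) * l.choose (a + 1) ≤ n.choose (k - a) * l.choose a := by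
  have hak : a < k := lt_of_lt_of_le hal hlk
  have e1 : n.choose (k - a) * (k - a) = n.choose (k - (a+1)) * (n - (k - (a+1))) := by
    have := Nat.choose_succ_right_eq n (k - (a+1))
    have h : k - (a+1) + 1 = k - a := by omega
    rwa [h] at this
  have e2 : l.choose (a + 1) * (a + 1) = l.choose a * (l - a) := by
    have := Nat.choose_succ_right_eq l a
    omega
  have harith : 4 * (l - a) * (k - a) ≤ (n - (k - (a+1))) * (a + 1) := by
    have h1 : n - (k - (a+1)) = n - k + a + 1 := by omega
    rw [h1]
    zify [show a ≤ l from hal.le, show a ≤ k from hak.le, show k ≤ n by omega]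
    nlinarith [h4, hal, hlk, ha, hkn, sq_nonneg ((a:ℤ) - l)]
  have hpos : 0 < (a + 1) * (k - a) := by
    have : 0 < k - a := by omega
    positivity
  apply Nat.le_of_mul_le_mul_right _ hpos
  calc 4 * n.choose (k - (a+1)) * l.choose (a+1) * ((a + 1) * (k - a))
      = 4 * n.choose (k - (a+1)) * (l.choose (a+1) * (a+1)) * (k - a) := by ring
    _ = 4 * n.choose (k - (a+1)) * (l.choose a * (l - a)) * (k - a) := by rw [e2]
    _ = (n.choose (k - (a+1)) * l.choose a) * (4 * (l - a) * (k - a)) := by ring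
    _ ≤ (n.choose (k - (a+1)) * l.choose a) * ((n - (k - (a+1))) * (a + 1)) :=
        Nat.mul_le_mul_left _ harith
    _ = (n.choose (k - (a+1)) * (n - (k - (a+1)))) * l.choose a * (a + 1) := by ring
    _ = (n.choose (k - a) * (k - a)) * l.choose a * (a + 1) := by rw [e1]
    _ = n.choose (k - a) * l.choose a * ((a + 1) * (k - a)) := by ring

/-- For `k ≤ n/4`, `α < l ≤ k` and `α ≥ 4kl/n`, the encoding length
`w(m,k,l,α) = log₂(2·2^m·2^α·C(n,k-α)·C(l,α))` satisfies
`w(m,k,l,α+1) ≤ w(m,k,l,α) - 1`. -/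
theorem stmt3 (n m k l a : ℕ) (ha : 1 ≤ a) (hal : a < l) (hlk : l ≤ k) (hkn : 4 * k ≤ n)
    (halow : 4 * (k : ℝ) * l / n ≤ (a : ℝ)) :
    Real.logb 2 (2 * 2 ^ m * 2 ^ (a + 1) * (n.choose (k - (a + 1)) : ℝ) *
        (l.choose (a + 1) : ℝ))
      ≤ Real.logb 2 (2 * 2 ^ m * 2 ^ a * (n.choose (k - a) : ℝ) * (l.choose a : ℝ)) - 1 := by
  have hn : 0 < n := by omega
  have h4 : 4 * k * l ≤ a * n := by
    have hn' : (0:ℝ) < (n:ℝ) := by exact_mod_cast hn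
    have := (div_le_iff₀ hn').mp halow
    exact_mod_cast this
  have hkey := key_choose n k l a ha hal hlk hkn h4
  have hC1 : 0 < n.choose (k - (a + 1)) := Nat.choose_pos (by omega)
  have hC2 : 0 < l.choose (a + 1) := Nat.choose_pos (by omega)
  have hC3 : 0 < n.choose (k - a) := Nat.choose_pos (by omega)
  have hC4 : 0 < l.choose a := Nat.choose_pos hal.le
  set x : ℝ := 2 * 2 ^ m * 2 ^ (a + 1) * (n.choose (k - (a + 1)) : ℝ) * (l.choose (a + 1) : ℝ)
    with hx
  set y : ℝ := 2 * 2 ^ m * 2 ^ a * (n.choose (k - a) : ℝ) * (l.choose a : ℝ) with hy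
  have hxpos : 0 < x := by
    have : (0:ℝ) < (n.choose (k - (a + 1)) : ℝ) := by exact_mod_cast hC1
    have : (0:ℝ) < (l.choose (a + 1) : ℝ) := by exact_mod_cast hC2
    positivity
  have hypos : 0 < y := by
    have : (0:ℝ) < (n.choose (k - a) : ℝ) := by exact_mod_cast hC3
    have : (0:ℝ) < (l.choose a : ℝ) := by exact_mod_cast hC4
    positivity
  have hkeyR : 4 * (n.choose (k - (a + 1)) : ℝ) * (l.choose (a + 1) : ℝ)
      ≤ (n.choose (k - a) : ℝ) * (l.choose a : ℝ) := by exact_mod_cast hkey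
  have hxy : x ≤ y / 2 := by
    rw [hx, hy, pow_succ]
    have hp : (0:ℝ) < 2 * 2 ^ m * 2 ^ a := by positivity
    nlinarith [hp]
  have h2 : Real.logb 2 x ≤ Real.logb 2 (y / 2) :=
    Real.logb_le_logb_of_le one_lt_two hxpos hxy
  have h3 : Real.logb 2 (y / 2) = Real.logb 2 y - 1 := by
    rw [Real.logb_div (ne_of_gt hypos) (by norm_num)]
    simp [Real.logb_self_eq_one]
  linarith
end

section
/- For k <= n/(8e), l <= k, and alpha >= max(8*e*k*l/n, m), the encoding length log2(2 * 2^m * 2^alpha * C(n, k-alpha) * C(l, alpha)) is strictly less than log2 C(n, k). -/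
lemma stmt4_lem1 (n k : ℕ) (hkn : k ≤ n) : ∀ j, j ≤ k →
    n.choose (k - j) * (n - k + 1) ^ j ≤ n.choose k * k ^ j := by
  intro j
  induction j with
  | zero => intro _; simp
  | succ j ih =>
    intro hj
    have hjk : j ≤ k := by omega
    have h1 : k - (j + 1) + 1 = k - j := by omega
    have key : n.choose (k - j) * (k - j) = n.choose (k - (j + 1)) * (n - (k - (j + 1))) := by
      have h := Nat.choose_succ_right_eq n (k - (j + 1))
      rw [h1] at h
      exact h
    calc n.choose (k - (j + 1)) * (n - k + 1) ^ (j + 1)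
        = (n.choose (k - (j + 1)) * (n - k + 1)) * (n - k + 1) ^ j := by ring
      _ ≤ (n.choose (k - (j + 1)) * (n - (k - (j + 1)))) * (n - k + 1) ^ j := by
          have : n - k + 1 ≤ n - (k - (j + 1)) := by omega
          exact Nat.mul_le_mul_right _ (Nat.mul_le_mul_left _ this)
      _ = (n.choose (k - j) * (k - j)) * (n - k + 1) ^ j := by rw [key]
      _ ≤ (n.choose (k - j) * k) * (n - k + 1) ^ j := by
          exact Nat.mul_le_mul_right _ (Nat.mul_le_mul_left _ (Nat.sub_le _ _))
      _ = k * (n.choose (k - j) * (n - k + 1) ^ j) := by ring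
      _ ≤ k * (n.choose k * k ^ j) := Nat.mul_le_mul_left _ (ih hjk)
      _ = n.choose k * k ^ (j + 1) := by ring

lemma stmt4_lem2 (l a : ℕ) : a.factorial * l.choose a ≤ l ^ a := by
  rw [← Nat.descFactorial_eq_factorial_mul_choose]
  exact Nat.descFactorial_le_pow l a

lemma stmt4_lem3 : ∀ a : ℕ, 1 ≤ a →
    (a : ℝ) ^ a * Real.exp 1 ≤ (a.factorial : ℝ) * (Real.exp 1) ^ a := by
  intro a
  induction a with
  | zero => intro h; omega
  | succ a ih =>
    intro _
    rcases Nat.eq_zero_or_pos a with h0 | hpos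
    · subst h0; simp
    have haR : (1 : ℝ) ≤ (a : ℝ) := by exact_mod_cast hpos
    have ha0 : (0 : ℝ) < (a : ℝ) := by linarith
    have hE0 := Real.exp_pos 1
    have hexp := Real.add_one_le_exp (1 / (a : ℝ))
    have hinv : (a : ℝ) * (1 / (a : ℝ)) = 1 := by field_simp
    have h1 : (a : ℝ) + 1 ≤ (a : ℝ) * Real.exp (1 / (a : ℝ)) := by
      have := mul_le_mul_of_nonneg_left hexp (le_of_lt ha0)
      nlinarith
    have hstep : ((a : ℝ) + 1) ^ a ≤ (a : ℝ) ^ a * Real.exp 1 := by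
      have h2 : ((a : ℝ) + 1) ^ a ≤ ((a : ℝ) * Real.exp (1 / (a : ℝ))) ^ a :=
        pow_le_pow_left₀ (by positivity) h1 a
      have h3 : ((a : ℝ) * Real.exp (1 / (a : ℝ))) ^ a = (a : ℝ) ^ a * Real.exp 1 := by
        rw [mul_pow, ← Real.exp_nat_mul, hinv]
      linarith [h2, h3.le, h3.ge]
    have hIH := ih hpos
    have key : ((a : ℝ) + 1) ^ (a + 1) * Real.exp 1
        ≤ (((a : ℝ) + 1) * (a.factorial : ℝ)) * Real.exp 1 ^ (a + 1) := by
      have e1 : ((a : ℝ) + 1) ^ (a + 1) * Real.exp 1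
          = ((a : ℝ) + 1) * (((a : ℝ) + 1) ^ a * Real.exp 1) := by ring
      have e2 : (((a : ℝ) + 1) * (a.factorial : ℝ)) * Real.exp 1 ^ (a + 1)
          = ((a : ℝ) + 1) * (((a.factorial : ℝ) * Real.exp 1 ^ a) * Real.exp 1) := by ring
      rw [e1, e2]
      apply mul_le_mul_of_nonneg_left _ (by positivity)
      calc ((a : ℝ) + 1) ^ a * Real.exp 1
          ≤ ((a : ℝ) ^ a * Real.exp 1) * Real.exp 1 :=
            mul_le_mul_of_nonneg_right hstep hE0.le
        _ ≤ ((a.factorial : ℝ) * Real.exp 1 ^ a) * Real.exp 1 :=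
            mul_le_mul_of_nonneg_right hIH hE0.le
    push_cast [Nat.factorial_succ]
    linarith [key]

set_option maxHeartbeats 800000 in
/-- For `k ≤ n/(8e)`, `α ≤ l ≤ k`, `α ≥ 8ekl/n` and `α ≥ m`, the encoding length
`log₂(2·2^m·2^α·C(n,k-α)·C(l,α))` is strictly less than `log₂ C(n,k)`; equivalently
`C(n,k) > 2^{m+1}·2^α·C(n,k-α)·C(l,α)`. -/
theorem stmt4 (n m k l a : ℕ) (ha : 1 ≤ a) (hal : a ≤ l) (hlk : l ≤ k)
    (hkn : (k : ℝ) ≤ (n : ℝ) / (8 * Real.exp 1))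
    (halow : 8 * Real.exp 1 * k * l / n ≤ (a : ℝ)) (ham : m ≤ a) :
    (2 : ℝ) ^ (m + 1) * 2 ^ a * (n.choose (k - a) : ℝ) * (l.choose a : ℝ)
      < (n.choose k : ℝ) := by
  set E := Real.exp 1 with hEdef
  have hE2 : (2 : ℝ) < E := by
    rw [hEdef]; nlinarith [Real.exp_one_gt_d9]
  have hE0 : (0 : ℝ) < E := by linarith
  have hk1 : 1 ≤ k := le_trans (le_trans ha hal) hlk
  have hK0 : (0 : ℝ) < k := by exact_mod_cast hk1
  -- n bounds
  have h8ek : 8 * E * (k : ℝ) ≤ (n : ℝ) := by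
    have h8E : (0 : ℝ) < 8 * E := by linarith
    rw [le_div_iff₀ h8E] at hkn
    linarith [hkn]
  have hN0 : (0 : ℝ) < n := by nlinarith
  have hknN : k ≤ n := by
    have : (k : ℝ) ≤ n := by nlinarith
    exact_mod_cast this
  set N := (n : ℝ) with hNdef
  set K := (k : ℝ) with hKdef
  set A := (n.choose (k - a) : ℝ) with hAdef
  set B := (l.choose a : ℝ) with hBdef
  set C := (n.choose k : ℝ) with hCdef
  have hApos : (0 : ℝ) < A := by
    rw [hAdef]
    exact_mod_cast Nat.choose_pos (le_trans (Nat.sub_le _ _) hknN)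
  -- ratio bound from lem1
  have hA' : A * (N - K + 1) ^ a ≤ C * K ^ a := by
    have h := stmt4_lem1 n k hknN a (le_trans hal hlk)
    have h2 : ((n.choose (k - a) * (n - k + 1) ^ a : ℕ) : ℝ)
        ≤ ((n.choose k * k ^ a : ℕ) : ℝ) := by exact_mod_cast h
    push_cast [Nat.cast_sub hknN] at h2
    convert h2 using 2
  -- bound on B : B * 8^a * K^a * E ≤ N^a
  have halow' : (l : ℝ) * (8 * E * K) ≤ (a : ℝ) * N := by
    rw [div_le_iff₀ hN0] at halow
    linarith [halow]
  have hBkey : B * 8 ^ a * K ^ a * E ≤ N ^ a := by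
    have h2 : ((l : ℝ)) ^ a * (8 * E * K) ^ a ≤ ((a : ℝ) * N) ^ a := by
      rw [← mul_pow]
      exact pow_le_pow_left₀ (by positivity) halow' a
    have h3 : B * (a.factorial : ℝ) ≤ (l : ℝ) ^ a := by
      have := stmt4_lem2 l a
      have h4 : ((a.factorial * l.choose a : ℕ) : ℝ) ≤ ((l ^ a : ℕ) : ℝ) := by
        exact_mod_cast this
      push_cast at h4
      linarith
    have h4 : (a : ℝ) ^ a * E ≤ (a.factorial : ℝ) * E ^ a := stmt4_lem3 a ha
    have hfac : (0 : ℝ) < (a.factorial : ℝ) := by positivity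
    have hEa : (0 : ℝ) < E ^ a := by positivity
    -- B * fac * (8EK)^a ≤ l^a (8EK)^a ≤ (aN)^a = a^a N^a
    have h5 : B * (a.factorial : ℝ) * (8 * E * K) ^ a ≤ (a : ℝ) ^ a * N ^ a := by
      calc B * (a.factorial : ℝ) * (8 * E * K) ^ a
          ≤ (l : ℝ) ^ a * (8 * E * K) ^ a :=
            mul_le_mul_of_nonneg_right h3 (by positivity)
        _ ≤ ((a : ℝ) * N) ^ a := h2
        _ = (a : ℝ) ^ a * N ^ a := mul_pow _ _ _
    have hNa : (0 : ℝ) ≤ N ^ a := by positivity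
    have h6 : (a : ℝ) ^ a * N ^ a * E ≤ (a.factorial : ℝ) * E ^ a * N ^ a := by
      nlinarith [mul_le_mul_of_nonneg_right h4 hNa]
    have h7 : B * (a.factorial : ℝ) * (8 * E * K) ^ a * E
        ≤ (a.factorial : ℝ) * E ^ a * N ^ a :=
      le_trans (mul_le_mul_of_nonneg_right h5 (le_of_lt hE0)) h6
    have h8 : (8 * E * K) ^ a = 8 ^ a * E ^ a * K ^ a := by
      rw [mul_pow, mul_pow]
    rw [h8] at h7
    -- cancel fac * E^a
    have hpos : (0 : ℝ) < (a.factorial : ℝ) * E ^ a := by positivity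
    rw [← mul_le_mul_iff_right₀ hpos]
    calc (a.factorial : ℝ) * E ^ a * (B * 8 ^ a * K ^ a * E)
        = B * (a.factorial : ℝ) * (8 ^ a * E ^ a * K ^ a) * E := by ring
      _ ≤ (a.factorial : ℝ) * E ^ a * N ^ a := h7
  -- LHS * (8^a K^a E) ≤ 2 * 4^a * A * N^a
  have hm : (2 : ℝ) ^ (m + 1) ≤ 2 ^ (a + 1) :=
    pow_le_pow_right₀ (by norm_num) (by omega)
  have hBnn : (0 : ℝ) ≤ B := by rw [hBdef]; positivity
  have hstep1 : (2 : ℝ) ^ (m + 1) * 2 ^ a * A * B * (8 ^ a * K ^ a * E)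
      ≤ 2 * 4 ^ a * A * N ^ a := by
    calc (2 : ℝ) ^ (m + 1) * 2 ^ a * A * B * (8 ^ a * K ^ a * E)
        ≤ 2 ^ (a + 1) * 2 ^ a * A * B * (8 ^ a * K ^ a * E) := by
          have hpos : (0 : ℝ) ≤ 2 ^ a * A * B * (8 ^ a * K ^ a * E) := by positivity
          nlinarith [mul_le_mul_of_nonneg_right hm hpos]
      _ = 2 ^ (a + 1) * 2 ^ a * A * (B * 8 ^ a * K ^ a * E) := by ring
      _ ≤ 2 ^ (a + 1) * 2 ^ a * A * N ^ a := by
          apply mul_le_mul_of_nonneg_left hBkey (by positivity)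
      _ = 2 * 4 ^ a * A * N ^ a := by
          rw [pow_succ]
          have : (4 : ℝ) ^ a = 2 ^ a * 2 ^ a := by
            rw [← mul_pow]; norm_num
          rw [this]; ring
  -- middle strict step: 2 * 4^a * A * N^a < E * (8*(N-K+1))^a * A / 8^a ... do directly
  have h8K : 8 * K ≤ N / E := by
    rw [le_div_iff₀ hE0]; nlinarith
  have hc0 : 4 * N ≤ 8 * (N - K + 1) := by
    have hNE : N / E ≤ N / 2 :=
      div_le_div_of_nonneg_left (le_of_lt hN0) (by norm_num) (le_of_lt hE2)
    have : 8 * K ≤ N / 2 := le_trans h8K hNE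
    have hN2 : N / 2 ≤ N := by linarith
    linarith
  have hmid : 2 * (4 * N) ^ a < E * (8 * (N - K + 1)) ^ a := by
    have hp : (0 : ℝ) < (4 * N) ^ a := by positivity
    have h1 : 2 * (4 * N) ^ a < E * (4 * N) ^ a := by nlinarith
    have h2 : (4 * N) ^ a ≤ (8 * (N - K + 1)) ^ a :=
      pow_le_pow_left₀ (by positivity) hc0 a
    calc 2 * (4 * N) ^ a < E * (4 * N) ^ a := h1
      _ ≤ E * (8 * (N - K + 1)) ^ a := mul_le_mul_of_nonneg_left h2 (le_of_lt hE0)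
  have hmult : (0 : ℝ) < 8 ^ a * K ^ a * E := by positivity
  have final : (2 : ℝ) ^ (m + 1) * 2 ^ a * A * B * (8 ^ a * K ^ a * E)
      < C * (8 ^ a * K ^ a * E) := by
    calc (2 : ℝ) ^ (m + 1) * 2 ^ a * A * B * (8 ^ a * K ^ a * E)
        ≤ 2 * 4 ^ a * A * N ^ a := hstep1
      _ = A * (2 * (4 * N) ^ a) := by rw [mul_pow]; ring
      _ < A * (E * (8 * (N - K + 1)) ^ a) := by
          exact mul_lt_mul_of_pos_left hmid hApos
      _ = (A * (N - K + 1) ^ a) * (8 ^ a * E) := by rw [mul_pow]; ring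
      _ ≤ (C * K ^ a) * (8 ^ a * E) := by
          apply mul_le_mul_of_nonneg_right hA' (by positivity)
      _ = C * (8 ^ a * K ^ a * E) := by ring
  exact lt_of_mul_lt_mul_right final (le_of_lt hmult)
end

section
/- If at each of n turns a guesser guesses a card uniformly from a fixed set A of size m of which none have been drawn yet (i.e., subset guessing against a uniformly shuffled deck), the expected number of correct guesses is H_m = sum_{j=1}^m 1/j. -/
open Finset

lemma key15 (n m : ℕ) (hmn : m ≤ n) (π : Equiv.Perm (Fin n)) :
    ∑ t : Fin n,
        (if (π t).val < m then
          (1 : ℝ) / ((Finset.univ.filter fun j : Fin n => t ≤ j ∧ (π j).val < m).card : ℝ)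
        else 0)
    = ∑ j ∈ Finset.Icc 1 m, 1 / (j : ℝ) := by
  set S : Finset (Fin n) := univ.filter (fun t => (π t).val < m) with hSdef
  set count : Fin n → ℕ := fun t => (univ.filter fun j : Fin n => t ≤ j ∧ (π j).val < m).card with hcount
  have hT : ∀ t, (univ.filter fun j : Fin n => t ≤ j ∧ (π j).val < m) = S.filter (fun j => t ≤ j) := by
    intro t
    ext j
    simp [hSdef, and_comm]
  have hS : S.card = m := by
    have h1 : S.card = (univ.filter fun j : Fin n => j.val < m).card := by
      apply Finset.card_bij (fun t _ => π t)
      · intro a ha; simp only [mem_filter, mem_univ, true_and]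
        exact (mem_filter.mp ha).2
      · intro a ha b hb hab; exact π.injective hab
      · intro b hb
        refine ⟨π.symm b, ?_, by simp⟩
        simp only [hSdef, mem_filter, mem_univ, true_and, Equiv.apply_symm_apply]
        exact (mem_filter.mp hb).2
    rw [h1]
    have h2 : (univ.filter fun j : Fin n => j.val < m).card = Fintype.card (Fin m) := by
      apply Finset.card_bij (fun (t : Fin n) ht => (⟨t.val, by simpa using ht⟩ : Fin m))
      · intros; exact mem_univ _
      · intro a ha b hb hab; exact Fin.val_injective (by simpa using congrArg Fin.val hab)
      · intro b hb
        exact ⟨⟨b.val, lt_of_lt_of_le b.isLt hmn⟩, by simp [b.isLt], rfl⟩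
    simp at h2; exact h2
  have hmem : ∀ t ∈ S, t ∈ S.filter (fun j => t ≤ j) := by
    intro t ht; simp_all
  have hanti : ∀ t₁ ∈ S, ∀ t₂ ∈ S, t₁ < t₂ → count t₂ < count t₁ := by
    intro t₁ h₁ t₂ h₂ hlt
    simp only [hcount, hT]
    apply Finset.card_lt_card
    constructor
    · intro j hj; simp at hj ⊢; exact ⟨hj.1, le_of_lt (lt_of_lt_of_le hlt hj.2)⟩
    · intro hsub
      have := hsub (hmem t₁ h₁)
      simp at this
      exact absurd (this.2) (not_le.mpr hlt)
  have hinj : Set.InjOn count S := by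
    intro a ha b hb hab
    rcases lt_trichotomy a b with h | h | h
    · exact absurd hab (ne_of_gt (hanti a ha b hb h))
    · exact h
    · exact absurd hab (ne_of_lt (hanti b hb a ha h))
  have hsubset : S.image count ⊆ Finset.Icc 1 m := by
    intro k hk
    simp only [mem_image] at hk
    obtain ⟨t, ht, rfl⟩ := hk
    simp only [mem_Icc]
    constructor
    · have : (S.filter (fun j => t ≤ j)).Nonempty := ⟨t, hmem t ht⟩
      simpa [hcount, hT] using Finset.card_pos.mpr this
    · calc count t ≤ S.card := by
            simp only [hcount, hT]; exact Finset.card_le_card (filter_subset _ _)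
        _ = m := hS
  have himage : S.image count = Finset.Icc 1 m := by
    apply Finset.eq_of_subset_of_card_le hsubset
    rw [Finset.card_image_of_injOn hinj, hS]
    simp
  calc ∑ t : Fin n, (if (π t).val < m then (1:ℝ)/(count t : ℝ) else 0)
      = ∑ t ∈ S, (1:ℝ)/(count t : ℝ) := by rw [Finset.sum_filter]
    _ = ∑ j ∈ Finset.Icc 1 m, 1/(j:ℝ) := by
        rw [← himage, Finset.sum_image (fun a ha b hb => hinj ha hb)]

/-- Subset guessing: a deck of `n` distinct cards is drawn in a uniformly random order
(card drawn at turn `t` is `π t`); the guesser fixes the subset `A = {c : c < m}` and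
at each turn guesses uniformly at random among the cards of `A` not yet drawn.
The probability of a correct guess at turn `t` is `1/#{remaining cards of A}` if the
drawn card lies in `A`, and `0` otherwise. The expected total number of correct
guesses equals `H_m = ∑_{j=1}^m 1/j`. -/
theorem stmt15 (n m : ℕ) (hm : 0 < m) (hmn : m ≤ n) :
    (∑ π : Equiv.Perm (Fin n), ∑ t : Fin n,
        (if (π t).val < m then
          (1 : ℝ) / ((Finset.univ.filter fun j : Fin n => t ≤ j ∧ (π j).val < m).card : ℝ)
        else 0))
      / (Fintype.card (Equiv.Perm (Fin n)) : ℝ)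
    = ∑ j ∈ Finset.Icc 1 m, 1 / (j : ℝ) := by
  have h : ∀ π : Equiv.Perm (Fin n), (∑ t : Fin n,
        (if (π t).val < m then
          (1 : ℝ) / ((Finset.univ.filter fun j : Fin n => t ≤ j ∧ (π j).val < m).card : ℝ)
        else 0)) = ∑ j ∈ Finset.Icc 1 m, 1 / (j : ℝ) := key15 n m hmn
  rw [Finset.sum_congr rfl (fun π _ => h π), Finset.sum_const, Finset.card_univ,
    nsmul_eq_mul]
  exact mul_div_cancel_left₀ _ (by positivity)
end
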